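/- Let T = π, μ₁ = δ₀ (the Dirac measure at 0, so U₁(y) = y(0)) and μ₂ = δ_{π/2} (so U₂(y) = y(π/2)). Suppose q ∈ L¹(0,π) satisfies q(x + π/2) = q(x) for almost every x ∈ (0,π/2), and set q̃(x) := q(π − x). Then Δ₁(λ) = Δ̃₁(λ), Δ₂(λ) = Δ̃₂(λ), and ω(λ) = ω̃(λ) for all λ ∈ ℂ; consequently M(λ) = M̃(λ) for every λ with Δ₁(λ) ≠ 0. (Hence the specification of M and ω does not uniquely determine the potential when q is not symmetric, i.e., when condition S fails.) -/

import Mathlib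

open MeasureTheory Set Filter Topology Complex

noncomputable section

/-- `y, y'` solve `-y'' + q y = λ y` on `[0,T]`: `y` and `y'` are (absolutely continuous)
integrals of `y'` and of `(q - λ) y`, respectively. -/
def IsSLSol (T : ℝ) (q : ℝ → ℂ) (lam : ℂ) (y y' : ℝ → ℂ) : Prop :=
  (∀ x ∈ Icc (0:ℝ) T, y x = y 0 + ∫ t in (0:ℝ)..x, y' t) ∧
  (∀ x ∈ Icc (0:ℝ) T, y' x = y' 0 + ∫ t in (0:ℝ)..x, (q t - lam) * y t)

/-- The nonlocal form `U(y) = ∫_{[0,T]} y dμ` for the finite complex Borel measure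
with density `f` with respect to the finite (positive) measure `μ`. -/
def Uf (μ : Measure ℝ) (f : ℝ → ℂ) (y : ℝ → ℂ) : ℂ := ∫ x, f x * y x ∂μ

/-- `H := μ({0})` for the complex measure `f dμ`. -/
def Hconst (μ : Measure ℝ) (f : ℝ → ℂ) : ℂ := ∫ x in ({0} : Set ℝ), f x ∂μ

/-- `X1, X2` (with derivatives `X1', X2'`) form the fundamental system of solutions of
`-y'' + q y = λ y` with `X1(0,λ)=X2'(0,λ)=1`, `X1'(0,λ)=X2(0,λ)=0`, for every `λ`. -/
def IsFundamental (T : ℝ) (q : ℝ → ℂ) (X1 X1' X2 X2' : ℂ → ℝ → ℂ) : Prop :=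
  ∀ lam : ℂ, IsSLSol T q lam (X1 lam) (X1' lam) ∧ IsSLSol T q lam (X2 lam) (X2' lam) ∧
    X1 lam 0 = 1 ∧ X1' lam 0 = 0 ∧ X2 lam 0 = 0 ∧ X2' lam 0 = 1

/-- `Z1, Z2` form the fundamental system of solutions normalized at `x = T`:
`Z1(T,λ)=Z2'(T,λ)=1`, `Z1'(T,λ)=Z2(T,λ)=0`. -/
def IsFundamentalT (T : ℝ) (q : ℝ → ℂ) (Z1 Z1' Z2 Z2' : ℂ → ℝ → ℂ) : Prop :=
  ∀ lam : ℂ, IsSLSol T q lam (Z1 lam) (Z1' lam) ∧ IsSLSol T q lam (Z2 lam) (Z2' lam) ∧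
    Z1 lam T = 1 ∧ Z1' lam T = 0 ∧ Z2 lam T = 0 ∧ Z2' lam T = 1

/-- The characteristic function `Δ(λ) = U(X1(·,λ)) V1(X2(·,λ)) - U(X2(·,λ)) V1(X1(·,λ))`,
where `U(y) = ∫ y dμ` (density `f`) and `V1(y) = y(T)`. -/
def Delta1 (T : ℝ) (μ : Measure ℝ) (f : ℝ → ℂ) (X1 X2 : ℂ → ℝ → ℂ) (lam : ℂ) : ℂ :=
  Uf μ f (X1 lam) * X2 lam T - Uf μ f (X2 lam) * X1 lam T

/-- The characteristic function `Δ₁₁(λ) = U(X1(·,λ)) V2(X2(·,λ)) - U(X2(·,λ)) V2(X1(·,λ))`,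
where `V2(y) = y'(T)`. -/
def Delta11 (T : ℝ) (μ : Measure ℝ) (f : ℝ → ℂ) (X1 X2 X1' X2' : ℂ → ℝ → ℂ) (lam : ℂ) : ℂ :=
  Uf μ f (X1 lam) * X2' lam T - Uf μ f (X2 lam) * X1' lam T

/-- `ω(λ) = U1(X1)U2(X2) - U1(X2)U2(X1)`. -/
def omegaF (μ1 : Measure ℝ) (f1 : ℝ → ℂ) (μ2 : Measure ℝ) (f2 : ℝ → ℂ)
    (X1 X2 : ℂ → ℝ → ℂ) (lam : ℂ) : ℂ :=
  Uf μ1 f1 (X1 lam) * Uf μ2 f2 (X2 lam) - Uf μ1 f1 (X2 lam) * Uf μ2 f2 (X1 lam)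

/-- `φ(x,λ) = U1(X1(·,λ)) X2(x,λ) - U1(X2(·,λ)) X1(x,λ)`. -/
def phiF (μ1 : Measure ℝ) (f1 : ℝ → ℂ) (X1 X2 : ℂ → ℝ → ℂ) (lam : ℂ) (x : ℝ) : ℂ :=
  Uf μ1 f1 (X1 lam) * X2 lam x - Uf μ1 f1 (X2 lam) * X1 lam x

/-- `φ'(x,λ)`, the `x`-derivative of `φ`. -/
def phiF' (μ1 : Measure ℝ) (f1 : ℝ → ℂ) (X1 X2 X1' X2' : ℂ → ℝ → ℂ) (lam : ℂ) (x : ℝ) : ℂ :=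
  Uf μ1 f1 (X1 lam) * X2' lam x - Uf μ1 f1 (X2 lam) * X1' lam x

/-- `θ(x,λ) = U2(X2(·,λ)) X1(x,λ) - U2(X1(·,λ)) X2(x,λ)`. -/
def thetaF (μ2 : Measure ℝ) (f2 : ℝ → ℂ) (X1 X2 : ℂ → ℝ → ℂ) (lam : ℂ) (x : ℝ) : ℂ :=
  Uf μ2 f2 (X2 lam) * X1 lam x - Uf μ2 f2 (X1 lam) * X2 lam x

/-- `θ'(x,λ)`, the `x`-derivative of `θ`. -/
def thetaF' (μ2 : Measure ℝ) (f2 : ℝ → ℂ) (X1 X2 X1' X2' : ℂ → ℝ → ℂ) (lam : ℂ) (x : ℝ) : ℂ :=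
  Uf μ2 f2 (X2 lam) * X1' lam x - Uf μ2 f2 (X1 lam) * X2' lam x

/-- `ψ(x,λ) = X2(T,λ) X1(x,λ) - X1(T,λ) X2(x,λ)`. -/
def psiF (T : ℝ) (X1 X2 : ℂ → ℝ → ℂ) (lam : ℂ) (x : ℝ) : ℂ :=
  X2 lam T * X1 lam x - X1 lam T * X2 lam x

/-- `ψ'(x,λ)`, the `x`-derivative of `ψ`. -/
def psiF' (T : ℝ) (X1 X2 X1' X2' : ℂ → ℝ → ℂ) (lam : ℂ) (x : ℝ) : ℂ :=
  X2 lam T * X1' lam x - X1 lam T * X2' lam x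

/-- `Φ(·,λ)` (with derivative `Φ'(·,λ)`) is, for every `λ` with `Δ₁(λ) ≠ 0`, the solution
of the equation with `U1(Φ) = 1` and `V1(Φ) = Φ(T) = 0`. -/
def IsWeyl (T : ℝ) (q : ℝ → ℂ) (μ1 : Measure ℝ) (f1 : ℝ → ℂ) (X1 X2 : ℂ → ℝ → ℂ)
    (Φ Φ' : ℂ → ℝ → ℂ) : Prop :=
  ∀ lam : ℂ, Delta1 T μ1 f1 X1 X2 lam ≠ 0 →
    IsSLSol T q lam (Φ lam) (Φ' lam) ∧ Uf μ1 f1 (Φ lam) = 1 ∧ Φ lam T = 0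

/-- Two entire functions have exactly the same zeros with the same multiplicities. -/
def SameZeros (F G : ℂ → ℂ) : Prop :=
  ∀ z : ℂ, ∀ n : ℕ, (∀ k < n, iteratedDeriv k F z = 0) ↔ (∀ k < n, iteratedDeriv k G z = 0)

/-- The sector `Π_δ = {ρ ≠ 0 : arg ρ ∈ [δ, π - δ]}`. -/
def PiSector (δ : ℝ) : Set ℂ := {ρ : ℂ | ρ ≠ 0 ∧ Complex.arg ρ ∈ Icc δ (Real.pi - δ)}

/-- The filter `|ρ| → ∞, ρ ∈ Π_δ`. -/
def sectorFilter (δ : ℝ) : Filter ℂ :=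
  (Filter.comap (fun ρ : ℂ => ‖ρ‖) Filter.atTop) ⊓ Filter.principal (PiSector δ)

/-- The linear form `Q(y) = ∫_{[0,T]} y dν + β y(T) + γ y'(T)` (density `g` w.r.t. `ν`). -/
def Qform (T : ℝ) (ν : Measure ℝ) (g : ℝ → ℂ) (β γ : ℂ) (y y' : ℝ → ℂ) : ℂ :=
  Uf ν g y + β * y T + γ * y' T



open intervalIntegral

lemma gronwall_bdd {c : ℝ} (hc : 0 < c) {K : ℝ → ℝ}
    (hK : IntervalIntegrable K volume 0 c) (hK0 : ∀ t, 0 ≤ K t)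
    {m : ℝ → ℝ} (hm : ContinuousOn m (Ico 0 c)) (hm0 : ∀ x ∈ Ico 0 c, 0 ≤ m x)
    {C : ℝ}
    (hint : ∀ x ∈ Ico 0 c, IntervalIntegrable (fun t => K t * m t) volume 0 x)
    (hineq : ∀ x ∈ Ico 0 c, m x ≤ C + ∫ t in (0:ℝ)..x, K t * m t) :
    ∃ M, ∀ x ∈ Ico 0 c, m x ≤ M := by
  set G : ℝ → ℝ := fun x => ∫ t in (0:ℝ)..x, K t with hG
  have hKIcc : IntegrableOn K (Icc 0 c) volume :=
    (intervalIntegrable_iff_integrableOn_Icc_of_le hc.le).mp hK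
  have hGcont : ContinuousOn G (Icc 0 c) := by
    have := intervalIntegral.continuousOn_primitive_interval
      (a := (0:ℝ)) (b := c) (μ := volume) (f := K) (by rwa [uIcc_of_le hc.le])
    rwa [uIcc_of_le hc.le] at this
  have hKsub : ∀ x y : ℝ, 0 ≤ x → x ≤ y → y ≤ c → IntervalIntegrable K volume x y := by
    intro x y hx hxy hyc
    refine hK.mono_set ?_
    rw [uIcc_of_le hxy, uIcc_of_le hc.le]
    exact Icc_subset_Icc hx hyc
  have hGmono : ∀ x y : ℝ, 0 ≤ x → x ≤ y → y ≤ c → G x ≤ G y := by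
    intro x y hx hxy hyc
    have h1 : G y - G x = ∫ t in x..y, K t :=
      integral_interval_sub_left (hKsub 0 y le_rfl (hx.trans hxy) hyc)
        (hKsub 0 x le_rfl hx (hxy.trans hyc))
    nlinarith [intervalIntegral.integral_nonneg (μ := volume) hxy (fun u _ => hK0 u)]
  have hG0 : G 0 = 0 := intervalIntegral.integral_same
  set Γ : ℝ := max (G c) 0 with hΓ
  have hΓ0 : 0 ≤ Γ := le_max_right _ _
  have hGle : ∀ x, 0 ≤ x → x ≤ c → G x ≤ Γ := fun x hx hxc =>
    le_trans (hGmono x c hx hxc le_rfl) (le_max_left _ _)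
  -- the stepping lemma
  have step : ∀ e d B, 0 ≤ e → e ≤ d → d < c → 0 ≤ B →
      (∀ x ∈ Icc e d, G x - G e ≤ 1/2) → (∀ x ∈ Icc 0 e, m x ≤ B) →
      ∀ x ∈ Icc 0 d, m x ≤ max B (2*C + 2*B*Γ) := by
    intro e d B he hed hdc hB hgap hprev
    have hIccsub : Icc e d ⊆ Ico 0 c := fun t ht => ⟨he.trans ht.1, lt_of_le_of_lt ht.2 hdc⟩
    obtain ⟨xs, hxs, hmax⟩ := (isCompact_Icc (a := e) (b := d)).exists_isMaxOn
      (nonempty_Icc.mpr hed) (hm.mono hIccsub)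
    set Mx := m xs with hMx
    have hMx0 : 0 ≤ Mx := hm0 xs (hIccsub hxs)
    have hxs0 : 0 ≤ xs := he.trans hxs.1
    have hxsc : xs < c := lt_of_le_of_lt hxs.2 hdc
    -- bound Mx
    have hsplit : (∫ t in (0:ℝ)..xs, K t * m t) =
        (∫ t in (0:ℝ)..e, K t * m t) + ∫ t in e..xs, K t * m t := by
      refine (integral_add_adjacent_intervals ?_ ?_).symm
      · exact (hint xs ⟨hxs0, hxsc⟩).mono_set
          (by rw [uIcc_of_le he, uIcc_of_le hxs0]; exact Icc_subset_Icc le_rfl hxs.1)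
      · exact (hint xs ⟨hxs0, hxsc⟩).mono_set
          (by rw [uIcc_of_le hxs.1, uIcc_of_le hxs0]; exact Icc_subset_Icc he le_rfl)
    have hI1 : (∫ t in (0:ℝ)..e, K t * m t) ≤ B * Γ := by
      have h1 : (∫ t in (0:ℝ)..e, K t * m t) ≤ ∫ t in (0:ℝ)..e, K t * B := by
        refine intervalIntegral.integral_mono_on he
          ((hint xs ⟨hxs0, hxsc⟩).mono_set
            (by rw [uIcc_of_le he, uIcc_of_le hxs0]; exact Icc_subset_Icc le_rfl hxs.1))
          ((hKsub 0 e le_rfl he (hed.trans hdc.le)).mul_const B) ?_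
        intro t ht
        exact mul_le_mul_of_nonneg_left (hprev t ht) (hK0 t)
      have h2 : (∫ t in (0:ℝ)..e, K t * B) = G e * B := by
        rw [intervalIntegral.integral_mul_const]
      have h3 : G e * B ≤ Γ * B :=
        mul_le_mul_of_nonneg_right (hGle e he (hed.trans hdc.le)) hB
      nlinarith
    have hI2 : (∫ t in e..xs, K t * m t) ≤ (1/2) * Mx := by
      have h1 : (∫ t in e..xs, K t * m t) ≤ ∫ t in e..xs, K t * Mx := by
        refine intervalIntegral.integral_mono_on hxs.1
          ((hint xs ⟨hxs0, hxsc⟩).mono_set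
            (by rw [uIcc_of_le hxs.1, uIcc_of_le hxs0]; exact Icc_subset_Icc he le_rfl))
          ((hKsub e xs he hxs.1 hxsc.le).mul_const Mx) ?_
        intro t ht
        exact mul_le_mul_of_nonneg_left (hmax ⟨ht.1, ht.2.trans hxs.2⟩) (hK0 t)
      have h2 : (∫ t in e..xs, K t * Mx) = (G xs - G e) * Mx := by
        rw [intervalIntegral.integral_mul_const,
          integral_interval_sub_left (hKsub 0 xs le_rfl hxs0 hxsc.le)
            (hKsub 0 e le_rfl he (hed.trans hdc.le))]
      have h3 : (G xs - G e) * Mx ≤ (1/2) * Mx :=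
        mul_le_mul_of_nonneg_right (hgap xs hxs) hMx0
      nlinarith
    have hMxb : Mx ≤ 2*C + 2*B*Γ := by
      have := hineq xs ⟨hxs0, hxsc⟩
      rw [hsplit] at this
      nlinarith
    intro x hx
    rcases le_or_gt x e with hxe | hxe
    · exact le_trans (hprev x ⟨hx.1, hxe⟩) (le_max_left _ _)
    · exact le_trans (le_trans (hmax ⟨hxe.le, hx.2⟩) hMxb) (le_max_right _ _)
  -- the induction
  set B : ℕ → ℝ := fun n => Nat.rec (max (m 0) 0) (fun _ Bn => max Bn (2*C + 2*Bn*Γ)) n with hB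
  have hB0 : ∀ n, 0 ≤ B n := by
    intro n; induction n with
    | zero => exact le_max_right _ _
    | succ n ih => exact le_trans ih (le_max_left _ _)
  have main : ∀ n : ℕ, ∀ d ∈ Ico 0 c, G d ≤ n / 2 → ∀ x ∈ Icc 0 d, m x ≤ B (n+1) := by
    intro n
    induction n with
    | zero =>
      intro d hd hGd
      have := step 0 d (B 0) le_rfl hd.1 hd.2 (hB0 0) ?_ ?_
      · exact this
      · intro x hx
        have := hGmono x d hx.1 hx.2 hd.2.le
        rw [hG0]
        norm_num at hGd ⊢
        have hGx : G x ≤ G d := hGmono x d hx.1 hx.2 hd.2.le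
        linarith
      · intro x hx
        have : x = 0 := le_antisymm hx.2 hx.1
        rw [this]; exact le_max_left _ _
    | succ n ih =>
      intro d hd hGd
      rcases le_or_gt (G d) (n / 2) with hle | hlt
      · intro x hx
        exact le_trans (ih d hd hle x hx) (le_max_left _ _)
      · have hG0n : G 0 ≤ n/2 := by rw [hG0]; positivity
        obtain ⟨e, he, hGe⟩ := intermediate_value_Icc hd.1
          (hGcont.mono (Icc_subset_Icc le_rfl hd.2.le)) (⟨hG0n, hlt.le⟩ : (n:ℝ)/2 ∈ Icc (G 0) (G d))
        have hprev := ih e ⟨he.1, lt_of_le_of_lt he.2 hd.2⟩ (le_of_eq hGe)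
        refine step e d (B (n+1)) he.1 he.2 hd.2 (hB0 (n+1)) ?_ (fun x hx => hprev x hx)
        intro x hx
        have hGx : G x ≤ G d := hGmono x d (he.1.trans hx.1) hx.2 hd.2.le
        rw [hGe]
        push_cast at hGd
        linarith
  obtain ⟨n, hn⟩ := exists_nat_ge (2 * Γ)
  refine ⟨B (n+1), fun x hx => main n x hx ?_ x ⟨hx.1, le_rfl⟩⟩
  have := hGle x hx.1 hx.2.le
  linarith


lemma IsSLSol.nice {b : ℝ} {q : ℝ → ℂ} {lam : ℂ} {y y' : ℝ → ℂ}
    (hb : 0 ≤ b) (hq : IntervalIntegrable q volume 0 b) (h : IsSLSol b q lam y y') :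
    ContinuousOn y (Icc 0 b) ∧ ContinuousOn y' (Icc 0 b) ∧
      IntervalIntegrable y' volume 0 b ∧
      IntervalIntegrable (fun t => (q t - lam) * y t) volume 0 b := by
  obtain ⟨h1, h2⟩ := h
  have hqsub : ∀ x, 0 ≤ x → x ≤ b → IntervalIntegrable (fun t => q t - lam) volume 0 x := by
    intro x hx hxb
    refine IntervalIntegrable.sub (hq.mono_set ?_) intervalIntegrable_const
    rw [uIcc_of_le hx, uIcc_of_le hb]; exact Icc_subset_Icc le_rfl hxb
  have gInt : ∀ x, 0 ≤ x → x ≤ b → ∀ Cb : ℝ,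
      AEStronglyMeasurable y (volume.restrict (Ioc 0 x)) →
      (∀ᵐ t ∂(volume.restrict (Ioc 0 x)), ‖y t‖ ≤ Cb) →
      IntervalIntegrable (fun t => (q t - lam) * y t) volume 0 x := by
    intro x hx hxb Cb hmeas hbd
    rw [intervalIntegrable_iff_integrableOn_Ioc_of_le hx]
    have hqi : IntegrableOn (fun t => q t - lam) (Ioc 0 x) volume := by
      rw [← intervalIntegrable_iff_integrableOn_Ioc_of_le hx]; exact hqsub x hx hxb
    exact (hqi.bdd_mul hmeas hbd).congr (Eventually.of_forall fun t => by ring)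
  have primCont : ∀ (f : ℝ → ℂ) (x : ℝ), 0 ≤ x → IntervalIntegrable f volume 0 x →
      ContinuousOn (fun u => ∫ t in (0:ℝ)..u, f t) (Icc 0 x) := by
    intro f x hx hf
    have := intervalIntegral.continuousOn_primitive_interval (μ := volume) (f := f)
      (a := (0:ℝ)) (b := x)
      (by rw [uIcc_of_le hx, ← intervalIntegrable_iff_integrableOn_Icc_of_le hx]; exact hf)
    rwa [uIcc_of_le hx] at this
  have ycont : ∀ x, 0 ≤ x → x ≤ b → IntervalIntegrable y' volume 0 x →
      ContinuousOn y (Icc 0 x) := by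
    intro x hx hxb hy'
    exact (continuousOn_const.add (primCont y' x hx hy')).congr
      (fun u hu => h1 u (Icc_subset_Icc le_rfl hxb hu))
  have contToGInt : ∀ x, 0 ≤ x → x ≤ b → ContinuousOn y (Icc 0 x) →
      IntervalIntegrable (fun t => (q t - lam) * y t) volume 0 x := by
    intro x hx hxb hyc
    obtain ⟨Cb, hCb⟩ := isCompact_Icc.exists_bound_of_continuousOn hyc
    refine gInt x hx hxb Cb ((hyc.aestronglyMeasurable measurableSet_Icc).mono_measure
      (Measure.restrict_mono Ioc_subset_Icc_self le_rfl)) ?_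
    filter_upwards [ae_restrict_mem measurableSet_Ioc] with t ht
    exact hCb t (Ioc_subset_Icc_self ht)
  by_cases hA : ∀ x ∈ Icc (0:ℝ) b, IntervalIntegrable y' volume 0 x
  · have hy'b := hA b ⟨hb, le_rfl⟩
    have hyc := ycont b hb le_rfl hy'b
    have hg := contToGInt b hb le_rfl hyc
    have hy'c : ContinuousOn y' (Icc 0 b) :=
      (continuousOn_const.add (primCont _ b hb hg)).congr (fun u hu => h2 u hu)
    exact ⟨hyc, hy'c, hy'b, hg⟩
  · exfalso
    push_neg at hA
    obtain ⟨a, ha, hna⟩ := hA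
    set A : Set ℝ := {x | x ∈ Icc (0:ℝ) b ∧ ¬ IntervalIntegrable y' volume 0 x} with hAdef
    have hAup : ∀ x ∈ Icc (0:ℝ) b, ∀ a' ∈ A, a' ≤ x → x ∈ A := by
      intro x hx a' ha' hax
      refine ⟨hx, fun hcon => ha'.2 (hcon.mono_set ?_)⟩
      rw [uIcc_of_le ha'.1.1, uIcc_of_le hx.1]; exact Icc_subset_Icc le_rfl hax
    have haA : a ∈ A := ⟨ha, hna⟩
    have hbA : b ∈ A := hAup b ⟨hb, le_rfl⟩ a haA ha.2
    have hAne : A.Nonempty := ⟨a, haA⟩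
    have hAbdd : BddBelow A := ⟨0, fun z hz => hz.1.1⟩
    set c := sInf A with hcdef
    have hc0 : 0 ≤ c := le_csInf hAne (fun z hz => hz.1.1)
    have hcb : c ≤ b := csInf_le hAbdd hbA
    have hlt : ∀ x, 0 ≤ x → x < c → IntervalIntegrable y' volume 0 x := by
      intro x hx hxc
      by_contra hcon
      exact absurd (csInf_le hAbdd ⟨⟨hx, hxc.le.trans hcb⟩, hcon⟩) (not_le.mpr hxc)
    by_cases hcInt : IntervalIntegrable y' volume 0 c
    · have hyc : ContinuousOn y (Icc 0 c) := ycont c hc0 hcb hcInt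
      have hconst : ∀ x, c < x → x ≤ b → y x = y 0 := by
        intro x hcx hxb
        obtain ⟨a', ha', ha'x⟩ := exists_lt_of_csInf_lt hAne hcx
        have hxA : x ∈ A := hAup x ⟨hc0.trans hcx.le, hxb⟩ a' ha' ha'x.le
        rw [h1 x ⟨hc0.trans hcx.le, hxb⟩, intervalIntegral.integral_undef hxA.2, add_zero]
      have hymeas : AEStronglyMeasurable y (volume.restrict (Ioc 0 b)) := by
        rw [← Ioc_union_Ioc_eq_Ioc hc0 hcb,
          Measure.restrict_union (Ioc_disjoint_Ioc_of_le le_rfl) measurableSet_Ioc]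
        refine AEStronglyMeasurable.add_measure
          ((hyc.aestronglyMeasurable measurableSet_Icc).mono_measure
            (Measure.restrict_mono Ioc_subset_Icc_self le_rfl)) ?_
        refine (aestronglyMeasurable_const (b := y 0)).congr ?_
        filter_upwards [ae_restrict_mem measurableSet_Ioc] with t ht
        exact (hconst t ht.1 ht.2).symm
      obtain ⟨C1, hC1⟩ := isCompact_Icc.exists_bound_of_continuousOn hyc
      have hg : IntervalIntegrable (fun t => (q t - lam) * y t) volume 0 b := by
        refine gInt b hb le_rfl (max C1 ‖y 0‖) hymeas ?_
        filter_upwards [ae_restrict_mem measurableSet_Ioc] with t ht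
        rcases le_or_gt t c with h' | h'
        · exact le_trans (hC1 t ⟨ht.1.le, h'⟩) (le_max_left _ _)
        · rw [hconst t h' ht.2]; exact le_max_right _ _
      have hy'c : ContinuousOn y' (Icc 0 b) :=
        (continuousOn_const.add (primCont _ b hb hg)).congr (fun u hu => h2 u hu)
      exact hbA.2 (ContinuousOn.intervalIntegrable (by rwa [uIcc_of_le hb]))
    · have hcpos : 0 < c := by
        rcases eq_or_lt_of_le hc0 with h' | h'
        · exact absurd (h' ▸ IntervalIntegrable.refl) hcInt
        · exact h'
      have hyIcc : ∀ x', 0 ≤ x' → x' < c → ContinuousOn y (Icc 0 x') :=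
        fun x' h0 hxc => ycont x' h0 (hxc.le.trans hcb) (hlt x' h0 hxc)
      have hy'Icc : ∀ x', 0 ≤ x' → x' < c → ContinuousOn y' (Icc 0 x') := by
        intro x' h0 hxc
        have hg' := contToGInt x' h0 (hxc.le.trans hcb) (hyIcc x' h0 hxc)
        exact (continuousOn_const.add (primCont _ x' h0 hg')).congr
          (fun u hu => h2 u (Icc_subset_Icc le_rfl (hxc.le.trans hcb) hu))
      have toIco : ∀ Y : ℝ → ℂ, (∀ x', 0 ≤ x' → x' < c → ContinuousOn Y (Icc 0 x')) →
          ContinuousOn Y (Ico 0 c) := by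
        intro Y hY z hz
        obtain ⟨x', hx1, hx2⟩ := exists_between hz.2
        have hmem : Icc (0:ℝ) x' ∈ 𝓝[Ico 0 c] z :=
          mem_nhdsWithin.mpr ⟨Iio x', isOpen_Iio, hx1, fun t ht => ⟨ht.2.1, ht.1.le⟩⟩
        exact ((hY x' (hz.1.trans hx1.le) hx2) z ⟨hz.1, hx1.le⟩).mono_of_mem_nhdsWithin hmem
      have hyIco : ContinuousOn y (Ico 0 c) := toIco y hyIcc
      have hy'Ico : ContinuousOn y' (Ico 0 c) := toIco y' hy'Icc
      set m : ℝ → ℝ := fun t => ‖y t‖ + ‖y' t‖ with hmdef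
      set K : ℝ → ℝ := fun t => 1 + ‖q t - lam‖ with hKdef
      have hKint : IntervalIntegrable K volume 0 c :=
        intervalIntegrable_const.add (hqsub c hc0 hcb).norm
      have hK0 : ∀ t, 0 ≤ K t := fun t => by positivity
      have hm0 : ∀ x ∈ Ico (0:ℝ) c, 0 ≤ m x := fun x _ => by positivity
      have hmIcc : ∀ x', 0 ≤ x' → x' < c → ContinuousOn m (Icc 0 x') :=
        fun x' h0 hxc => ((hyIcc x' h0 hxc).norm.add ((hy'Icc x' h0 hxc).norm))
      have hKm : ∀ x ∈ Ico (0:ℝ) c, IntervalIntegrable (fun t => K t * m t) volume 0 x := by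
        rintro x ⟨h0, hxc⟩
        obtain ⟨Cm, hCm⟩ := isCompact_Icc.exists_bound_of_continuousOn (hmIcc x h0 hxc)
        rw [intervalIntegrable_iff_integrableOn_Ioc_of_le h0]
        have hKi : IntegrableOn K (Ioc 0 x) volume := by
          rw [← intervalIntegrable_iff_integrableOn_Ioc_of_le h0]
          refine hKint.mono_set ?_
          rw [uIcc_of_le h0, uIcc_of_le hc0]; exact Icc_subset_Icc le_rfl hxc.le
        have hmmeas : AEStronglyMeasurable m (volume.restrict (Ioc 0 x)) :=
          ((hmIcc x h0 hxc).aestronglyMeasurable measurableSet_Icc).mono_measure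
            (Measure.restrict_mono Ioc_subset_Icc_self le_rfl)
        refine (hKi.bdd_mul (c := Cm) hmmeas ?_).congr (Eventually.of_forall fun t => by ring)
        filter_upwards [ae_restrict_mem measurableSet_Ioc] with t ht
        exact hCm t (Ioc_subset_Icc_self ht)
      have hineq : ∀ x ∈ Ico (0:ℝ) c, m x ≤ m 0 + ∫ t in (0:ℝ)..x, K t * m t := by
        rintro x ⟨h0, hxc⟩
        have hy'int := hlt x h0 hxc
        have hgint := contToGInt x h0 (hxc.le.trans hcb) (hyIcc x h0 hxc)
        have e1 : ‖y x‖ ≤ ‖y 0‖ + ∫ t in (0:ℝ)..x, ‖y' t‖ := by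
          rw [h1 x ⟨h0, (hxc.le.trans hcb)⟩]
          exact le_trans (norm_add_le _ _)
            (by gcongr; exact intervalIntegral.norm_integral_le_integral_norm h0)
        have e2 : ‖y' x‖ ≤ ‖y' 0‖ + ∫ t in (0:ℝ)..x, ‖(q t - lam) * y t‖ := by
          rw [h2 x ⟨h0, (hxc.le.trans hcb)⟩]
          exact le_trans (norm_add_le _ _)
            (by gcongr; exact intervalIntegral.norm_integral_le_integral_norm h0)
        have e3 : (∫ t in (0:ℝ)..x, ‖y' t‖) + (∫ t in (0:ℝ)..x, ‖(q t - lam) * y t‖)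
            = ∫ t in (0:ℝ)..x, (‖y' t‖ + ‖(q t - lam) * y t‖) :=
          (intervalIntegral.integral_add hy'int.norm hgint.norm).symm
        have e4 : (∫ t in (0:ℝ)..x, (‖y' t‖ + ‖(q t - lam) * y t‖))
            ≤ ∫ t in (0:ℝ)..x, K t * m t := by
          refine intervalIntegral.integral_mono_on h0 (hy'int.norm.add hgint.norm)
            (hKm x ⟨h0, hxc⟩) ?_
          intro t _
          simp only [hmdef, hKdef, norm_mul]
          have n1 : (0:ℝ) ≤ ‖y t‖ := norm_nonneg _
          have n2 : (0:ℝ) ≤ ‖y' t‖ := norm_nonneg _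
          have n3 : (0:ℝ) ≤ ‖q t - lam‖ := norm_nonneg _
          nlinarith
        simp only [hmdef]
        linarith
      obtain ⟨M, hM⟩ := gronwall_bdd hcpos hKint hK0
        ((hyIco.norm.add hy'Ico.norm)) hm0 hKm hineq
      refine hcInt ?_
      rw [intervalIntegrable_iff_integrableOn_Ioc_of_le hc0]
      have hae : AEStronglyMeasurable y' (volume.restrict (Ioc 0 c)) := by
        rw [← Measure.restrict_congr_set Ioo_ae_eq_Ioc]
        exact (hy'Ico.aestronglyMeasurable measurableSet_Ico).mono_measure
          (Measure.restrict_mono Ioo_subset_Ico_self le_rfl)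
      refine Integrable.mono' (g := fun _ => M) (integrableOn_const
        measure_Ioc_lt_top.ne) hae ?_
      rw [← Measure.restrict_congr_set Ioo_ae_eq_Ioc]
      filter_upwards [ae_restrict_mem measurableSet_Ioo] with t ht
      have := hM t ⟨ht.1.le, ht.2⟩
      have : ‖y t‖ + ‖y' t‖ ≤ M := this
      linarith [norm_nonneg (y t)]

lemma primCont {f : ℝ → ℂ} {x : ℝ} (hx : 0 ≤ x) (hf : IntervalIntegrable f volume 0 x) :
    ContinuousOn (fun u => ∫ t in (0:ℝ)..u, f t) (Icc 0 x) := by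
  have := intervalIntegral.continuousOn_primitive_interval (μ := volume) (f := f)
    (a := (0:ℝ)) (b := x)
    (by rw [uIcc_of_le hx, ← intervalIntegrable_iff_integrableOn_Icc_of_le hx]; exact hf)
  rwa [uIcc_of_le hx] at this

lemma iiMono {f : ℝ → ℂ} {x b : ℝ} (hx : 0 ≤ x) (hxb : x ≤ b) (hb : 0 ≤ b)
    (hf : IntervalIntegrable f volume 0 b) : IntervalIntegrable f volume 0 x := by
  refine hf.mono_set ?_
  rw [uIcc_of_le hx, uIcc_of_le hb]; exact Icc_subset_Icc le_rfl hxb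

lemma parts_core {b : ℝ} (hb : 0 ≤ b) {h : ℝ → ℂ} (hh : IntervalIntegrable h volume 0 b)
    {y y' : ℝ → ℂ} (hy : ContinuousOn y (Icc 0 b)) (hy' : ContinuousOn y' (Icc 0 b))
    (hyI : IntervalIntegrable y' volume 0 b)
    (heq : ∀ x ∈ Icc (0:ℝ) b, y x = y 0 + ∫ t in (0:ℝ)..x, y' t) :
    ∀ x ∈ Icc (0:ℝ) b,
      y x * ∫ t in (0:ℝ)..x, h t =
      (∫ t in (0:ℝ)..x, y' t * ∫ s in (0:ℝ)..t, h s) + ∫ t in (0:ℝ)..x, y t * h t := by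
  rintro x ⟨hx0, hxb⟩
  have hsub : Icc (0:ℝ) x ⊆ Icc 0 b := Icc_subset_Icc le_rfl hxb
  have hhx : IntegrableOn h (Ioc 0 x) volume := by
    rw [← intervalIntegrable_iff_integrableOn_Ioc_of_le hx0]; exact iiMono hx0 hxb hb hh
  have hy'x : IntegrableOn y' (Ioc 0 x) volume := by
    rw [← intervalIntegrable_iff_integrableOn_Ioc_of_le hx0]; exact iiMono hx0 hxb hb hyI
  obtain ⟨Cy, hCy⟩ := isCompact_Icc.exists_bound_of_continuousOn (hy.mono hsub)
  have hymeas : AEStronglyMeasurable y (volume.restrict (Ioc 0 x)) :=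
    (((hy.mono hsub).aestronglyMeasurable measurableSet_Icc).mono_measure
      (Measure.restrict_mono Ioc_subset_Icc_self le_rfl))
  have hyh : IntegrableOn (fun s => y s * h s) (Ioc 0 x) volume := by
    refine hhx.bdd_mul (c := Cy) hymeas ?_
    filter_upwards [ae_restrict_mem measurableSet_Ioc] with t ht
    exact hCy t (Ioc_subset_Icc_self ht)
  set μx := volume.restrict (Ioc (0:ℝ) x) with hμx
  set F : ℝ × ℝ → ℂ := fun p => if p.2 ≤ p.1 then y' p.1 * h p.2 else 0 with hF
  have hFind : F = Set.indicator {p : ℝ × ℝ | p.2 ≤ p.1} (fun p => y' p.1 * h p.2) := by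
    funext p
    rw [Set.indicator_apply]
    rfl
  have hFint : Integrable F (μx.prod μx) := by
    rw [hFind]
    refine Integrable.indicator ?_ (measurableSet_le measurable_snd measurable_fst)
    exact Integrable.mul_prod hy'x hhx
  have swap : (∫ t, (∫ s, F (t, s) ∂μx) ∂μx) = ∫ s, (∫ t, F (t, s) ∂μx) ∂μx := by
    have : Integrable (Function.uncurry fun t s => F (t, s)) (μx.prod μx) := hFint
    exact MeasureTheory.integral_integral_swap this
  have lhs_eq : (∫ t, (∫ s, F (t, s) ∂μx) ∂μx) =
      ∫ t in Ioc (0:ℝ) x, y' t * ∫ s in Ioc (0:ℝ) t, h s := by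
    refine setIntegral_congr_fun measurableSet_Ioc (fun t ht => ?_)
    have : (fun s => F (t, s)) = Set.indicator (Iic t) (fun s => y' t * h s) := by
      funext s
      rw [Set.indicator_apply]
      rfl
    rw [this, hμx, MeasureTheory.integral_indicator measurableSet_Iic, Measure.restrict_restrict measurableSet_Iic]
    have hset : Iic t ∩ Ioc 0 x = Ioc 0 t := by
      ext s
      simp only [mem_inter_iff, mem_Iic, mem_Ioc]
      exact ⟨fun ⟨u, v⟩ => ⟨v.1, u⟩, fun ⟨u, v⟩ => ⟨v, u, v.trans ht.2⟩⟩
    rw [hset, MeasureTheory.integral_const_mul]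
  have rhs_eq : (∫ s, (∫ t, F (t, s) ∂μx) ∂μx) =
      (y x * ∫ s in Ioc (0:ℝ) x, h s) - ∫ s in Ioc (0:ℝ) x, y s * h s := by
    have step1 : (∫ s, (∫ t, F (t, s) ∂μx) ∂μx) = ∫ s in Ioc (0:ℝ) x, (y x - y s) * h s := by
      refine setIntegral_congr_fun measurableSet_Ioc (fun s hs => ?_)
      have : (fun t => F (t, s)) = Set.indicator (Ici s) (fun t => y' t * h s) := by
        funext t
        rw [Set.indicator_apply]
        simp only [hF, mem_Ici]
      rw [this, hμx, MeasureTheory.integral_indicator measurableSet_Ici,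
        Measure.restrict_restrict measurableSet_Ici]
      have hset : Ici s ∩ Ioc 0 x = Icc s x := by
        ext t
        simp only [mem_inter_iff, mem_Ici, mem_Ioc, mem_Icc]
        exact ⟨fun ⟨u, v⟩ => ⟨u, v.2⟩, fun ⟨u, v⟩ => ⟨u, hs.1.trans_le u, v⟩⟩
      rw [hset, MeasureTheory.integral_mul_const, integral_Icc_eq_integral_Ioc,
        ← intervalIntegral.integral_of_le hs.2]
      have hsx : IntervalIntegrable y' volume 0 s :=
        iiMono (hs.1.le) (hs.2.trans hxb) hb hyI
      have hxx : IntervalIntegrable y' volume 0 x := iiMono hx0 hxb hb hyI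
      have hsub2 := integral_interval_sub_left hxx hsx
      rw [heq x ⟨hx0, hxb⟩, heq s ⟨hs.1.le, hs.2.trans hxb⟩, ← hsub2]
      ring
    rw [step1]
    have i1 : IntegrableOn (fun s => y x * h s) (Ioc 0 x) volume := hhx.const_mul _
    rw [show (fun s => (y x - y s) * h s) = (fun s => y x * h s - y s * h s) by funext s; ring]
    rw [integral_sub i1 hyh, MeasureTheory.integral_const_mul]
  have main : (∫ t in Ioc (0:ℝ) x, y' t * ∫ s in Ioc (0:ℝ) t, h s) =
      (y x * ∫ s in Ioc (0:ℝ) x, h s) - ∫ s in Ioc (0:ℝ) x, y s * h s := by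
    rw [← lhs_eq, swap, rhs_eq]
  have conv1 : (∫ t in (0:ℝ)..x, h t) = ∫ s in Ioc (0:ℝ) x, h s :=
    intervalIntegral.integral_of_le hx0
  have conv2 : (∫ t in (0:ℝ)..x, y t * h t) = ∫ s in Ioc (0:ℝ) x, y s * h s :=
    intervalIntegral.integral_of_le hx0
  have conv3 : (∫ t in (0:ℝ)..x, y' t * ∫ s in (0:ℝ)..t, h s) =
      ∫ t in Ioc (0:ℝ) x, y' t * ∫ s in Ioc (0:ℝ) t, h s := by
    rw [intervalIntegral.integral_of_le hx0]
    refine setIntegral_congr_fun measurableSet_Ioc (fun t ht => ?_)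
    rw [intervalIntegral.integral_of_le ht.1.le]
  rw [conv1, conv2, conv3, main]
  ring

lemma prod_formula {b : ℝ} (hb : 0 ≤ b) {q : ℝ → ℂ} {lam : ℂ}
    (hq : IntervalIntegrable q volume 0 b)
    {y y' z z' : ℝ → ℂ} (hy : IsSLSol b q lam y y') (hz : IsSLSol b q lam z z') :
    ∀ x ∈ Icc (0:ℝ) b, y x * z' x = y 0 * z' 0 +
      ∫ t in (0:ℝ)..x, (y' t * z' t + y t * ((q t - lam) * z t)) := by
  obtain ⟨hyc, hy'c, hyI, _⟩ := hy.nice hb hq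
  obtain ⟨hzc, hz'c, hzI, hgzI⟩ := hz.nice hb hq
  intro x hx
  obtain ⟨hx0, hxb⟩ := hx
  have hsub : Icc (0:ℝ) x ⊆ Icc 0 b := Icc_subset_Icc le_rfl hxb
  set h : ℝ → ℂ := fun t => (q t - lam) * z t with hhdef
  have core := parts_core hb hgzI hyc hy'c hyI hy.1 x ⟨hx0, hxb⟩
  have e1 : y x = y 0 + ∫ t in (0:ℝ)..x, y' t := hy.1 x ⟨hx0, hxb⟩
  have e2 : z' x = z' 0 + ∫ t in (0:ℝ)..x, h t := hz.2 x ⟨hx0, hxb⟩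
  -- integrability pieces on [0,x]
  have hhx : IntervalIntegrable h volume 0 x := iiMono hx0 hxb hb hgzI
  have hyIx : IntervalIntegrable y' volume 0 x := iiMono hx0 hxb hb hyI
  have hy'z' : IntervalIntegrable (fun t => y' t * z' t) volume 0 x := by
    refine ContinuousOn.intervalIntegrable ?_
    rw [uIcc_of_le hx0]
    exact ((hy'c.mono hsub).mul (hz'c.mono hsub))
  have hyh : IntervalIntegrable (fun t => y t * h t) volume 0 x := by
    rw [intervalIntegrable_iff_integrableOn_Ioc_of_le hx0]
    obtain ⟨Cy, hCy⟩ := isCompact_Icc.exists_bound_of_continuousOn (hyc.mono hsub)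
    refine Integrable.bdd_mul (c := Cy)
      ((intervalIntegrable_iff_integrableOn_Ioc_of_le hx0).mp hhx)
      (((hyc.mono hsub).aestronglyMeasurable measurableSet_Icc).mono_measure
        (Measure.restrict_mono Ioc_subset_Icc_self le_rfl)) ?_
    filter_upwards [ae_restrict_mem measurableSet_Ioc] with t ht
    exact hCy t (Ioc_subset_Icc_self ht)
  have hy'H : IntervalIntegrable (fun t => y' t * ∫ s in (0:ℝ)..t, h s) volume 0 x := by
    refine ContinuousOn.intervalIntegrable ?_
    rw [uIcc_of_le hx0]
    exact (hy'c.mono hsub).mul (primCont hx0 hhx)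
  have c1 : (∫ t in (0:ℝ)..x, (y' t * z' t + y t * ((q t - lam) * z t))) =
      (∫ t in (0:ℝ)..x, y' t * z' t) + ∫ t in (0:ℝ)..x, y t * h t :=
    intervalIntegral.integral_add hy'z' hyh
  have c2 : (∫ t in (0:ℝ)..x, y' t * z' t) =
      (∫ t in (0:ℝ)..x, (y' t * z' 0 + y' t * ∫ s in (0:ℝ)..t, h s)) := by
    refine intervalIntegral.integral_congr (fun t ht => ?_)
    rw [uIcc_of_le hx0] at ht
    rw [hz.2 t (hsub ht)]
    ring
  have c3 : (∫ t in (0:ℝ)..x, (y' t * z' 0 + y' t * ∫ s in (0:ℝ)..t, h s)) =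
      (∫ t in (0:ℝ)..x, y' t) * z' 0 + ∫ t in (0:ℝ)..x, y' t * ∫ s in (0:ℝ)..t, h s := by
    rw [intervalIntegral.integral_add (hyIx.mul_const _) hy'H,
      intervalIntegral.integral_mul_const]
  rw [c1, c2, c3]
  set A := ∫ t in (0:ℝ)..x, y' t
  set Hx := ∫ t in (0:ℝ)..x, h t
  set T1 := ∫ t in (0:ℝ)..x, y' t * ∫ s in (0:ℝ)..t, h s
  set T2 := ∫ t in (0:ℝ)..x, y t * h t
  linear_combination z' 0 * e1 + y x * e2 + core

lemma wronskian_const {b : ℝ} (hb : 0 ≤ b) {q : ℝ → ℂ} {lam : ℂ}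
    (hq : IntervalIntegrable q volume 0 b)
    {y y' z z' : ℝ → ℂ} (hy : IsSLSol b q lam y y') (hz : IsSLSol b q lam z z') :
    ∀ x ∈ Icc (0:ℝ) b, y x * z' x - y' x * z x = y 0 * z' 0 - y' 0 * z 0 := by
  intro x hx
  have h1 := prod_formula hb hq hy hz x hx
  have h2 := prod_formula hb hq hz hy x hx
  have h3 : (∫ t in (0:ℝ)..x, (y' t * z' t + y t * ((q t - lam) * z t))) =
      (∫ t in (0:ℝ)..x, (z' t * y' t + z t * ((q t - lam) * y t))) :=
    intervalIntegral.integral_congr (fun t _ => by ring)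
  linear_combination h1 - h2 + h3

lemma represent {b : ℝ} (hb : 0 ≤ b) {q : ℝ → ℂ} {lam : ℂ}
    (hq : IntervalIntegrable q volume 0 b)
    {x1 x1' x2 x2' y y' : ℝ → ℂ}
    (hX1 : IsSLSol b q lam x1 x1') (hX2 : IsSLSol b q lam x2 x2')
    (i1 : x1 0 = 1) (i2 : x1' 0 = 0) (i3 : x2 0 = 0) (i4 : x2' 0 = 1)
    (hy : IsSLSol b q lam y y') :
    ∀ x ∈ Icc (0:ℝ) b, y x = y 0 * x1 x + y' 0 * x2 x ∧
      y' x = y 0 * x1' x + y' 0 * x2' x := by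
  intro x hx
  have e1 := wronskian_const hb hq hy hX2 x hx
  have e2 := wronskian_const hb hq hy hX1 x hx
  have e3 := wronskian_const hb hq hX1 hX2 x hx
  rw [i3, i4] at e1
  rw [i1, i2] at e2
  rw [i1, i2, i3, i4] at e3
  constructor
  · linear_combination x1 x * e1 - x2 x * e2 - y x * e3
  · linear_combination x1' x * e1 - x2' x * e2 - y' x * e3

lemma IsSLSol.reflect {b : ℝ} (hb : 0 ≤ b) {q : ℝ → ℂ} {lam : ℂ} {y y' : ℝ → ℂ}
    (hq : IntervalIntegrable q volume 0 b) (h : IsSLSol b q lam y y') :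
    IsSLSol b (fun x => q (b - x)) lam (fun x => y (b - x)) (fun x => -y' (b - x)) := by
  obtain ⟨hyc, hy'c, hyI, hgI⟩ := h.nice hb hq
  constructor
  · intro x hx
    have hbx : b - x ∈ Icc (0:ℝ) b := ⟨by linarith [hx.2], by linarith [hx.1]⟩
    have c1 : (∫ t in (0:ℝ)..x, -y' (b - t)) = -(∫ t in (b-x)..b, y' t) := by
      rw [intervalIntegral.integral_neg, intervalIntegral.integral_comp_sub_left (fun t => y' t) b]
      norm_num
    have c2 : (∫ t in (b-x)..b, y' t) = y b - y (b - x) := by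
      have hIbx : IntervalIntegrable y' volume 0 (b-x) := iiMono hbx.1 hbx.2 hb hyI
      have hsub2 := integral_interval_sub_left hyI hIbx
      rw [h.1 b ⟨hb, le_rfl⟩, h.1 (b-x) hbx, ← hsub2]
      ring
    simp only [sub_zero]
    rw [c1, c2]
    ring
  · intro x hx
    have hbx : b - x ∈ Icc (0:ℝ) b := ⟨by linarith [hx.2], by linarith [hx.1]⟩
    have c1 : (∫ t in (0:ℝ)..x, ((fun u => q (b - u)) t - lam) * y (b - t)) =
        ∫ t in (b-x)..b, (q t - lam) * y t := by
      have := intervalIntegral.integral_comp_sub_left (a := (0:ℝ)) (b := x)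
        (fun t => (q t - lam) * y t) b
      simp only [sub_zero] at this
      exact this
    have c2 : (∫ t in (b-x)..b, (q t - lam) * y t) = y' b - y' (b - x) := by
      have hIbx : IntervalIntegrable (fun t => (q t - lam) * y t) volume 0 (b-x) :=
        iiMono hbx.1 hbx.2 hb hgI
      have hsub2 := integral_interval_sub_left hgI hIbx
      rw [h.2 b ⟨hb, le_rfl⟩, h.2 (b-x) hbx, ← hsub2]
      ring
    simp only [sub_zero]
    rw [c1, c2]
    ring

lemma IsSLSol.translate {b d : ℝ} (hd : 0 ≤ d) (hdb : d ≤ b) {q : ℝ → ℂ} {lam : ℂ}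
    {y y' : ℝ → ℂ} (hb : 0 ≤ b) (hq : IntervalIntegrable q volume 0 b)
    (h : IsSLSol b q lam y y') :
    IsSLSol (b - d) (fun x => q (x + d)) lam (fun x => y (x + d)) (fun x => y' (x + d)) := by
  obtain ⟨hyc, hy'c, hyI, hgI⟩ := h.nice hb hq
  constructor
  · intro x hx
    have hxd : x + d ∈ Icc (0:ℝ) b := ⟨by linarith [hx.1], by linarith [hx.2]⟩
    have c1 : (∫ t in (0:ℝ)..x, y' (t + d)) = ∫ t in d..(x+d), y' t := by
      rw [intervalIntegral.integral_comp_add_right]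
      norm_num
    have c2 : (∫ t in d..(x+d), y' t) = y (x+d) - y d := by
      have hI1 : IntervalIntegrable y' volume 0 (x+d) := iiMono (by linarith [hx.1]) hxd.2 hb hyI
      have hI2 : IntervalIntegrable y' volume 0 d := iiMono hd hdb hb hyI
      have hsub2 := integral_interval_sub_left hI1 hI2
      rw [h.1 (x+d) hxd, h.1 d ⟨hd, hdb⟩, ← hsub2]
      ring
    simp only [zero_add]
    rw [c1, c2]
    ring
  · intro x hx
    have hxd : x + d ∈ Icc (0:ℝ) b := ⟨by linarith [hx.1], by linarith [hx.2]⟩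
    have c1 : (∫ t in (0:ℝ)..x, ((fun u => q (u + d)) t - lam) * y (t + d)) =
        ∫ t in d..(x+d), (q t - lam) * y t := by
      have := intervalIntegral.integral_comp_add_right (a := (0:ℝ)) (b := x)
        (fun t => (q t - lam) * y t) d
      simp only [zero_add] at this
      exact this
    have c2 : (∫ t in d..(x+d), (q t - lam) * y t) = y' (x+d) - y' d := by
      have hI1 : IntervalIntegrable (fun t => (q t - lam) * y t) volume 0 (x+d) :=
        iiMono (by linarith [hx.1]) hxd.2 hb hgI
      have hI2 : IntervalIntegrable (fun t => (q t - lam) * y t) volume 0 d := iiMono hd hdb hb hgI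
      have hsub2 := integral_interval_sub_left hI1 hI2
      rw [h.2 (x+d) hxd, h.2 d ⟨hd, hdb⟩, ← hsub2]
      ring
    simp only [zero_add]
    rw [c1, c2]
    ring

lemma IsSLSol.congr_q {b : ℝ} {q q' : ℝ → ℂ} {lam : ℂ} {y y' : ℝ → ℂ}
    (hqq : ∀ᵐ t ∂(volume.restrict (Ioo (0:ℝ) b)), q t = q' t)
    (h : IsSLSol b q lam y y') : IsSLSol b q' lam y y' := by
  refine ⟨h.1, fun x hx => ?_⟩
  rw [h.2 x hx]
  congr 1
  rw [intervalIntegral.integral_of_le hx.1, intervalIntegral.integral_of_le hx.1,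
    integral_Ioc_eq_integral_Ioo, integral_Ioc_eq_integral_Ioo]
  refine integral_congr_ae ?_
  have hle : volume.restrict (Ioo (0:ℝ) x) ≤ volume.restrict (Ioo (0:ℝ) b) :=
    Measure.restrict_mono (Ioo_subset_Ioo le_rfl hx.2) le_rfl
  filter_upwards [ae_mono hle hqq] with t ht
  rw [ht]

lemma IsSLSol.mono {b b' : ℝ} {q : ℝ → ℂ} {lam : ℂ} {y y' : ℝ → ℂ} (h' : b' ≤ b)
    (h : IsSLSol b q lam y y') : IsSLSol b' q lam y y' :=
  ⟨fun x hx => h.1 x ⟨hx.1, hx.2.trans h'⟩, fun x hx => h.2 x ⟨hx.1, hx.2.trans h'⟩⟩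

/-- counterexample: `T = π`, `U₁(y)=y(0)`, `U₂(y)=y(π/2)`; if
`q(x+π/2) = q(x)` a.e. on `(0,π/2)` and `q̃(x) = q(π-x)`, then `Δ₁ = Δ̃₁`, `Δ₂ = Δ̃₂`,
`ω = ω̃`, and `M(λ) = M̃(λ)` whenever `Δ₁(λ) ≠ 0`. -/
theorem statement17
    (q qt : ℝ → ℂ)
    (hq : IntegrableOn q (Ioo 0 Real.pi)) (hqt : IntegrableOn qt (Ioo 0 Real.pi))
    (hper : ∀ᵐ x ∂(volume.restrict (Ioo 0 (Real.pi/2))), q (x + Real.pi/2) = q x)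
    (hqtdef : ∀ x : ℝ, qt x = q (Real.pi - x))
    (X1 X1' X2 X2' Xt1 Xt1' Xt2 Xt2' : ℂ → ℝ → ℂ)
    (hX : IsFundamental Real.pi q X1 X1' X2 X2')
    (hXt : IsFundamental Real.pi qt Xt1 Xt1' Xt2 Xt2')
    (Φ Φ' Φt Φt' : ℂ → ℝ → ℂ)
    (hΦ : ∀ lam : ℂ, X1 lam 0 * X2 lam Real.pi - X2 lam 0 * X1 lam Real.pi ≠ 0 →
      IsSLSol Real.pi q lam (Φ lam) (Φ' lam) ∧ Φ lam 0 = 1 ∧ Φ lam Real.pi = 0)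
    (hΦt : ∀ lam : ℂ, Xt1 lam 0 * Xt2 lam Real.pi - Xt2 lam 0 * Xt1 lam Real.pi ≠ 0 →
      IsSLSol Real.pi qt lam (Φt lam) (Φt' lam) ∧ Φt lam 0 = 1 ∧ Φt lam Real.pi = 0) :
    (∀ lam : ℂ, X1 lam 0 * X2 lam Real.pi - X2 lam 0 * X1 lam Real.pi =
      Xt1 lam 0 * Xt2 lam Real.pi - Xt2 lam 0 * Xt1 lam Real.pi) ∧
    (∀ lam : ℂ, X1 lam (Real.pi/2) * X2 lam Real.pi - X2 lam (Real.pi/2) * X1 lam Real.pi =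
      Xt1 lam (Real.pi/2) * Xt2 lam Real.pi - Xt2 lam (Real.pi/2) * Xt1 lam Real.pi) ∧
    (∀ lam : ℂ, X1 lam 0 * X2 lam (Real.pi/2) - X2 lam 0 * X1 lam (Real.pi/2) =
      Xt1 lam 0 * Xt2 lam (Real.pi/2) - Xt2 lam 0 * Xt1 lam (Real.pi/2)) ∧
    (∀ lam : ℂ, X1 lam 0 * X2 lam Real.pi - X2 lam 0 * X1 lam Real.pi ≠ 0 →
      Φ lam (Real.pi/2) = Φt lam (Real.pi/2)) := by
  have hpi : (0:ℝ) ≤ Real.pi := Real.pi_pos.le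
  have hpi2pos : (0:ℝ) < Real.pi/2 := by positivity
  have hpi2 : (0:ℝ) ≤ Real.pi/2 := hpi2pos.le
  have hpi2le : Real.pi/2 ≤ Real.pi := by linarith [Real.pi_pos]
  have hhalf : Real.pi/2 + Real.pi/2 = Real.pi := by ring
  have hsub2 : Real.pi - Real.pi/2 = Real.pi/2 := by ring
  have hqI : IntervalIntegrable q volume 0 Real.pi := by
    rw [intervalIntegrable_iff_integrableOn_Ioo_of_le hpi]; exact hq
  have hqtI : IntervalIntegrable qt volume 0 Real.pi := by
    rw [intervalIntegrable_iff_integrableOn_Ioo_of_le hpi]; exact hqt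
  have hqI2 : IntervalIntegrable q volume 0 (Real.pi/2) := iiMono hpi2 hpi2le hpi hqI
  have hqtI2 : IntervalIntegrable qt volume 0 (Real.pi/2) := iiMono hpi2 hpi2le hpi hqtI
  have hq_eq : (fun x => qt (Real.pi - x)) = q := funext fun x => by rw [hqtdef]; congr 1; ring
  have hqt_eq2 : (fun x => qt (Real.pi/2 - x)) = fun x => q (x + Real.pi/2) :=
    funext fun x => by rw [hqtdef]; congr 1; ring
  have hper' : ∀ᵐ t ∂(volume.restrict (Ioo (0:ℝ) (Real.pi/2))),
      (fun x => q (x + Real.pi/2)) t = q t := hper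
  have key : ∀ lam : ℂ,
      X2 lam Real.pi = Xt2 lam Real.pi ∧
      X2 lam (Real.pi/2) = Xt2 lam (Real.pi/2) ∧
      (X1 lam (Real.pi/2) * X2 lam Real.pi - X2 lam (Real.pi/2) * X1 lam Real.pi =
        Xt1 lam (Real.pi/2) * Xt2 lam Real.pi - Xt2 lam (Real.pi/2) * Xt1 lam Real.pi) := by
    intro lam
    obtain ⟨hs1, hs2, i1, i2, i3, i4⟩ := hX lam
    obtain ⟨ht1, ht2, j1, j2, j3, j4⟩ := hXt lam
    have hs1h : IsSLSol (Real.pi/2) q lam (X1 lam) (X1' lam) := hs1.mono hpi2le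
    have hs2h : IsSLSol (Real.pi/2) q lam (X2 lam) (X2' lam) := hs2.mono hpi2le
    have wrπ : X1 lam Real.pi * X2' lam Real.pi - X1' lam Real.pi * X2 lam Real.pi = 1 := by
      have := wronskian_const hpi hqI hs1 hs2 Real.pi ⟨hpi, le_rfl⟩
      rw [i1, i2, i3, i4] at this
      linear_combination this
    have wrh : X1 lam (Real.pi/2) * X2' lam (Real.pi/2)
        - X1' lam (Real.pi/2) * X2 lam (Real.pi/2) = 1 := by
      have := wronskian_const hpi2 hqI2 hs1h hs2h (Real.pi/2) ⟨hpi2, le_rfl⟩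
      rw [i1, i2, i3, i4] at this
      linear_combination this
    -- full-interval reflection of Xt2
    have hu := ht2.reflect hpi hqtI
    rw [hq_eq] at hu
    have hrep := represent hpi hqI hs1 hs2 i1 i2 i3 i4 hu Real.pi ⟨hpi, le_rfl⟩
    simp only [sub_self, sub_zero] at hrep
    rw [j3, j4] at hrep
    obtain ⟨r1, r2⟩ := hrep
    have k1 : X2 lam Real.pi = Xt2 lam Real.pi := by
      linear_combination (X2' lam Real.pi) * r1 - (X2 lam Real.pi) * r2
        + (Xt2 lam Real.pi) * wrπ
    -- full-interval reflection of Xt1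
    have hu1 := ht1.reflect hpi hqtI
    rw [hq_eq] at hu1
    have hrep1 := represent hpi hqI hs1 hs2 i1 i2 i3 i4 hu1 Real.pi ⟨hpi, le_rfl⟩
    simp only [sub_self, sub_zero] at hrep1
    rw [j1, j2] at hrep1
    obtain ⟨r1', r2'⟩ := hrep1
    have kD : Xt1 lam Real.pi = X2' lam Real.pi := by
      linear_combination (-(X2' lam Real.pi)) * r1' + (X2 lam Real.pi) * r2'
        - (Xt1 lam Real.pi) * wrπ
    -- half-interval reflection of Xt2 (uses periodicity)
    have hv0 := (ht2.mono hpi2le).reflect hpi2 hqtI2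
    rw [hqt_eq2] at hv0
    have hv : IsSLSol (Real.pi/2) q lam (fun x => Xt2 lam (Real.pi/2 - x))
        (fun x => -Xt2' lam (Real.pi/2 - x)) := IsSLSol.congr_q hper' hv0
    have hrep2 := represent hpi2 hqI2 hs1h hs2h i1 i2 i3 i4 hv (Real.pi/2) ⟨hpi2, le_rfl⟩
    simp only [sub_self, sub_zero] at hrep2
    rw [j3, j4] at hrep2
    obtain ⟨rr1, rr2⟩ := hrep2
    have k3 : X2 lam (Real.pi/2) = Xt2 lam (Real.pi/2) := by
      linear_combination (X2' lam (Real.pi/2)) * rr1 - (X2 lam (Real.pi/2)) * rr2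
        + (Xt2 lam (Real.pi/2)) * wrh
    -- half-interval reflection of Xt1 (uses periodicity)
    have hv1 := (ht1.mono hpi2le).reflect hpi2 hqtI2
    rw [hqt_eq2] at hv1
    have hv1' : IsSLSol (Real.pi/2) q lam (fun x => Xt1 lam (Real.pi/2 - x))
        (fun x => -Xt1' lam (Real.pi/2 - x)) := IsSLSol.congr_q hper' hv1
    have hrep3 := represent hpi2 hqI2 hs1h hs2h i1 i2 i3 i4 hv1' (Real.pi/2) ⟨hpi2, le_rfl⟩
    simp only [sub_self, sub_zero] at hrep3
    rw [j1, j2] at hrep3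
    obtain ⟨rr1', rr2'⟩ := hrep3
    have kE : Xt1 lam (Real.pi/2) = X2' lam (Real.pi/2) := by
      linear_combination (-(X2' lam (Real.pi/2))) * rr1' + (X2 lam (Real.pi/2)) * rr2'
        - (Xt1 lam (Real.pi/2)) * wrh
    -- translations (periodicity)
    have hw0 := hs2.translate hpi2 hpi2le hpi hqI
    rw [hsub2] at hw0
    have hw : IsSLSol (Real.pi/2) q lam (fun x => X2 lam (x + Real.pi/2))
        (fun x => X2' lam (x + Real.pi/2)) := IsSLSol.congr_q hper' hw0
    have hrepw := represent hpi2 hqI2 hs1h hs2h i1 i2 i3 i4 hw (Real.pi/2) ⟨hpi2, le_rfl⟩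
    simp only [zero_add] at hrepw
    rw [hhalf] at hrepw
    obtain ⟨t1, t2⟩ := hrepw
    have hw1 := hs1.translate hpi2 hpi2le hpi hqI
    rw [hsub2] at hw1
    have hw1' : IsSLSol (Real.pi/2) q lam (fun x => X1 lam (x + Real.pi/2))
        (fun x => X1' lam (x + Real.pi/2)) := IsSLSol.congr_q hper' hw1
    have hrepw1 := represent hpi2 hqI2 hs1h hs2h i1 i2 i3 i4 hw1' (Real.pi/2) ⟨hpi2, le_rfl⟩
    simp only [zero_add] at hrepw1
    rw [hhalf] at hrepw1
    obtain ⟨t3, t4⟩ := hrepw1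
    refine ⟨k1, k3, ?_⟩
    rw [kE, kD, ← k1, ← k3]
    linear_combination (X1 lam (Real.pi/2) - X2' lam (Real.pi/2)) * t1
      - (X2 lam (Real.pi/2)) * t3 + (X2 lam (Real.pi/2)) * t2
  refine ⟨fun lam => ?_, fun lam => ?_, fun lam => ?_, fun lam hne => ?_⟩
  · obtain ⟨_, _, i1, _, i3, _⟩ := hX lam
    obtain ⟨_, _, j1, _, j3, _⟩ := hXt lam
    rw [i1, i3, j1, j3]
    linear_combination (key lam).1
  · exact (key lam).2.2
  · obtain ⟨_, _, i1, _, i3, _⟩ := hX lam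
    obtain ⟨_, _, j1, _, j3, _⟩ := hXt lam
    rw [i1, i3, j1, j3]
    linear_combination (key lam).2.1
  · obtain ⟨hs1, hs2, i1, i2, i3, i4⟩ := hX lam
    obtain ⟨ht1, ht2, j1, j2, j3, j4⟩ := hXt lam
    obtain ⟨k1, k3, k2⟩ := key lam
    have hb1 : X2 lam Real.pi ≠ 0 := by
      intro h0
      apply hne
      rw [i1, i3, h0]
      ring
    have hne' : Xt1 lam 0 * Xt2 lam Real.pi - Xt2 lam 0 * Xt1 lam Real.pi ≠ 0 := by
      rw [j1, j3, ← k1]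
      simpa using hb1
    obtain ⟨hsolΦ, hΦ0, hΦπ⟩ := hΦ lam hne
    obtain ⟨hsolΦt, hΦt0, hΦtπ⟩ := hΦt lam hne'
    have p1 := (represent hpi hqI hs1 hs2 i1 i2 i3 i4 hsolΦ Real.pi ⟨hpi, le_rfl⟩).1
    have p2 := (represent hpi hqI hs1 hs2 i1 i2 i3 i4 hsolΦ (Real.pi/2) ⟨hpi2, hpi2le⟩).1
    rw [hΦπ, hΦ0] at p1
    rw [hΦ0] at p2
    have q1 := (represent hpi hqtI ht1 ht2 j1 j2 j3 j4 hsolΦt Real.pi ⟨hpi, le_rfl⟩).1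
    have q2 := (represent hpi hqtI ht1 ht2 j1 j2 j3 j4 hsolΦt (Real.pi/2) ⟨hpi2, hpi2le⟩).1
    rw [hΦtπ, hΦt0] at q1
    rw [hΦt0] at q2
    have key1 : Φ lam (Real.pi/2) * X2 lam Real.pi =
        X1 lam (Real.pi/2) * X2 lam Real.pi - X1 lam Real.pi * X2 lam (Real.pi/2) := by
      linear_combination (X2 lam Real.pi) * p2 - (X2 lam (Real.pi/2)) * p1
    have key2 : Φt lam (Real.pi/2) * Xt2 lam Real.pi =
        Xt1 lam (Real.pi/2) * Xt2 lam Real.pi - Xt1 lam Real.pi * Xt2 lam (Real.pi/2) := by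
      linear_combination (Xt2 lam Real.pi) * q2 - (Xt2 lam (Real.pi/2)) * q1
    have final : Φ lam (Real.pi/2) * X2 lam Real.pi = Φt lam (Real.pi/2) * X2 lam Real.pi := by
      linear_combination key1 - key2 + k2 - (Φt lam (Real.pi/2)) * k1
    exact mul_right_cancel₀ hb1 final
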